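/- Let n ≥ 1 and let C̃_n be the n × (n+2) rational tridiagonal matrix whose i-th row has entries 2, 2, 1 in columns i, i+1, i+2 and zeros elsewhere. Every submatrix of C̃_n formed by a set of consecutive columns has maximal rank (equal to the minimum of n and the number of chosen columns), except for the n × n submatrix obtained by deleting the first and last columns when n ≡ 3 (mod 4), which has rank n − 1. -/

import Mathlib

/-- The `n × (n+2)` rational tridiagonal matrix whose `i`-th row has entries
`2, 2, 1` in columns `i, i+1, i+2` and zeros elsewhere. -/
def matCt (n : ℕ) : Matrix (Fin n) (Fin (n + 2)) ℚ :=
  fun i j =>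
    if (j : ℕ) = (i : ℕ) then 2
    else if (j : ℕ) = (i : ℕ) + 1 then 2
    else if (j : ℕ) = (i : ℕ) + 2 then 1
    else 0

/-! ### Auxiliary material -/

def useq : ℕ → ℚ
  | 0 => 0
  | 1 => 1
  | (k+2) => -2 * useq k - 2 * useq (k+1)

lemma useq_rec (k : ℕ) : useq (k+2) = -2 * useq k - 2 * useq (k+1) := by rw [useq]

lemma useq_vals (m : ℕ) : useq (4*m) = 0 ∧ useq (4*m+1) = (-4:ℚ)^m ∧
    useq (4*m+2) = -2*(-4:ℚ)^m ∧ useq (4*m+3) = 2*(-4:ℚ)^m := by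
  induction m with
  | zero => norm_num [useq]
  | succ m ih =>
    obtain ⟨h0, h1, h2, h3⟩ := ih
    have h4 : useq (4*m+2+2) = 0 := by
      rw [useq, show 4*m+2+1 = 4*m+3 by ring, h2, h3]; ring
    have h5 : useq (4*m+3+2) = (-4:ℚ)^(m+1) := by
      rw [useq, show 4*m+3+1 = 4*m+2+2 by ring, h3, h4]; ring
    have h6 : useq (4*m+4+2) = -2*(-4:ℚ)^(m+1) := by
      rw [useq, show 4*m+4 = 4*m+2+2 by ring, show 4*m+2+2+1 = 4*m+3+2 by ring, h4, h5]; ring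
    have h7 : useq (4*m+5+2) = 2*(-4:ℚ)^(m+1) := by
      rw [useq, show 4*m+5 = 4*m+3+2 by ring, show 4*m+3+2+1 = 4*m+4+2 by ring, h5, h6]; ring
    refine ⟨?_, ?_, ?_, ?_⟩
    · rw [show 4*(m+1) = 4*m+2+2 by ring]; exact h4
    · rw [show 4*(m+1)+1 = 4*m+3+2 by ring]; exact h5
    · rw [show 4*(m+1)+2 = 4*m+4+2 by ring]; exact h6
    · rw [show 4*(m+1)+3 = 4*m+5+2 by ring]; exact h7

lemma useq_sum_ne (n : ℕ) (hn : 1 ≤ n) (h : n % 4 ≠ 3) : useq (n-1) + useq n ≠ 0 := by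
  have hm := n.div_add_mod 4
  set m := n / 4 with hmdef
  have hne : ((-4:ℚ)^m) ≠ 0 := pow_ne_zero _ (by norm_num)
  have hlt : n % 4 < 4 := Nat.mod_lt _ (by norm_num)
  rcases (by omega : n % 4 = 0 ∨ n % 4 = 1 ∨ n % 4 = 2 ∨ n % 4 = 3) with h4 | h4 | h4 | h4
  · have hm1 : 1 ≤ m := by omega
    obtain ⟨_, _, _, v3⟩ := useq_vals (m-1)
    obtain ⟨v0, _, _, _⟩ := useq_vals m
    rw [show n - 1 = 4*(m-1)+3 by omega, show n = 4*m by omega, v3, v0]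
    have : ((-4:ℚ)^(m-1)) ≠ 0 := pow_ne_zero _ (by norm_num)
    intro hc; apply this; linarith
  · obtain ⟨v0, v1, _, _⟩ := useq_vals m
    rw [show n - 1 = 4*m by omega, show n = 4*m+1 by omega, v0, v1]
    intro hc; apply hne; linarith
  · obtain ⟨_, v1, v2, _⟩ := useq_vals m
    rw [show n - 1 = 4*m+1 by omega, show n = 4*m+2 by omega, v1, v2]
    intro hc; apply hne; linarith
  · omega

lemma useq_succ_zero (n : ℕ) (h : n % 4 = 3) : useq (n+1) = 0 := by
  obtain ⟨v0, _, _, _⟩ := useq_vals (n/4+1)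
  rw [show n + 1 = 4*(n/4+1) by omega]; exact v0

lemma sum_pick {m : ℕ} (z : Fin m → ℚ) (c k : ℕ) :
    (∑ i : Fin m, if (i : ℕ) + c = k then z i else 0) =
      if h : c ≤ k ∧ k - c < m then z ⟨k - c, h.2⟩ else 0 := by
  split_ifs with h
  · rw [Finset.sum_eq_single (⟨k - c, h.2⟩ : Fin m)]
    · simp only [Fin.val_mk]; rw [if_pos (by omega)]
    · intro i _ hi
      rw [if_neg]
      intro hc
      exact hi (by apply Fin.ext; simp only [Fin.val_mk]; omega)
    · intro hmem; exact absurd (Finset.mem_univ _) hmem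
  · apply Finset.sum_eq_zero
    intro i _
    rw [if_neg]
    intro hc
    exact h (by constructor <;> omega)

lemma rank_full {m k : ℕ} (A : Matrix (Fin m) (Fin k) ℚ)
    (h : ∀ x : Fin k → ℚ, A.mulVec x = 0 → x = 0) : A.rank = k := by
  have hker : LinearMap.ker A.mulVecLin = ⊥ := by
    rw [LinearMap.ker_eq_bot']
    intro x hx
    exact h x (by simpa [Matrix.mulVecLin_apply] using hx)
  have h2 := LinearMap.finrank_range_add_finrank_ker A.mulVecLin
  rw [hker, finrank_bot, add_zero, Module.finrank_fin_fun] at h2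
  exact h2

lemma rank_corank_one {m k : ℕ} (A : Matrix (Fin m) (Fin k) ℚ)
    (v : Fin k → ℚ) (hv : v ≠ 0) (hAv : A.mulVec v = 0)
    (h : ∀ x, A.mulVec x = 0 → ∃ c : ℚ, x = c • v) : A.rank = k - 1 := by
  have hker : LinearMap.ker A.mulVecLin = Submodule.span ℚ {v} := by
    apply le_antisymm
    · intro x hx
      obtain ⟨c, rfl⟩ := h x (by simpa [Matrix.mulVecLin_apply] using hx)
      exact Submodule.smul_mem _ _ (Submodule.mem_span_singleton_self v)
    · rw [Submodule.span_le, Set.singleton_subset_iff]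
      simpa [LinearMap.mem_ker, Matrix.mulVecLin_apply] using hAv
  have h2 := LinearMap.finrank_range_add_finrank_ker A.mulVecLin
  rw [hker, finrank_span_singleton hv, Module.finrank_fin_fun] at h2
  have h3 : A.rank = Module.finrank ℚ (LinearMap.range A.mulVecLin) := rfl
  omega

/-! ### Extension of a vector indexed by the chosen columns to a function on `ℕ` -/

noncomputable def Xext (a b : ℕ) (x : Fin (b - a + 1) → ℚ) : ℕ → ℚ :=
  fun k => if h : a ≤ k ∧ k ≤ b then x ⟨k - a, by omega⟩ else 0

lemma Xext_apply {a b : ℕ} (hab : a ≤ b) (x : Fin (b - a + 1) → ℚ) (t : Fin (b - a + 1)) :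
    Xext a b x (a + t) = x t := by
  have ht : (t : ℕ) < b - a + 1 := t.isLt
  rw [Xext, dif_pos (by omega)]
  congr 1
  apply Fin.ext; simp only [Fin.val_mk]; omega

lemma Xext_zero {a b : ℕ} (x : Fin (b - a + 1) → ℚ) (k : ℕ) (h : k < a ∨ b < k) :
    Xext a b x k = 0 := by
  rw [Xext, dif_neg (by omega)]

noncomputable def Wext (n : ℕ) (z : Fin n → ℚ) : ℕ → ℚ :=
  fun k => if h : 2 ≤ k ∧ k ≤ n + 1 then z ⟨k - 2, by omega⟩ else 0

lemma Wext_apply {n : ℕ} (z : Fin n → ℚ) (i : Fin n) : Wext n z ((i : ℕ) + 2) = z i := by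
  rw [Wext, dif_pos (by omega)]
  congr 1

lemma Wext_zero {n : ℕ} (z : Fin n → ℚ) (k : ℕ) (h : k < 2 ∨ n + 1 < k) : Wext n z k = 0 := by
  rw [Wext, dif_neg (by omega)]

/-! ### `mulVec` formulas for the submatrix and its transpose -/

lemma mulVec_col_eq {n a b : ℕ} (hab : a ≤ b) (hb : b < n + 2)
    (x : Fin (b - a + 1) → ℚ) (i : Fin n) :
    ((matCt n).submatrix id
        (fun t : Fin (b - a + 1) => (⟨a + (t : ℕ), by omega⟩ : Fin (n + 1 + 1)))).mulVec x i =
      2 * Xext a b x i + 2 * Xext a b x ((i:ℕ)+1) + Xext a b x ((i:ℕ)+2) := by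
  have key : ∀ t : Fin (b - a + 1),
      ((matCt n).submatrix id
        (fun t : Fin (b - a + 1) => (⟨a + (t : ℕ), by omega⟩ : Fin (n + 1 + 1)))) i t * x t =
      (if (t:ℕ) + a = (i:ℕ) then 2 * x t else 0) +
      ((if (t:ℕ) + a = (i:ℕ)+1 then 2 * x t else 0) +
       (if (t:ℕ) + a = (i:ℕ)+2 then x t else 0)) := by
    intro t
    simp only [Matrix.submatrix_apply, id_eq, matCt, Fin.val_mk]
    split_ifs <;> (try (exfalso; omega)) <;> ring
  simp only [Matrix.mulVec, dotProduct]
  rw [Finset.sum_congr rfl (fun t _ => key t),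
    Finset.sum_add_distrib, Finset.sum_add_distrib, sum_pick, sum_pick, sum_pick]
  have conv : ∀ (k : ℕ) (c : ℚ),
      (if h : a ≤ k ∧ k - a < b - a + 1 then c * x ⟨k - a, h.2⟩ else 0) = c * Xext a b x k := by
    intro k c
    rw [Xext]
    by_cases h : a ≤ k ∧ k ≤ b
    · rw [dif_pos (by omega), dif_pos h]
    · rw [dif_neg (by omega), dif_neg h, mul_zero]
  have conv1 : ∀ (k : ℕ),
      (if h : a ≤ k ∧ k - a < b - a + 1 then x ⟨k - a, h.2⟩ else 0) = Xext a b x k := by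
    intro k
    have := conv k 1
    simpa using this
  rw [conv, conv, conv1]
  ring

lemma mulVec_row_eq {n a b : ℕ} (hab : a ≤ b) (hb : b < n + 2)
    (z : Fin n → ℚ) (t : Fin (b - a + 1)) :
    ((matCt n).submatrix id
        (fun t : Fin (b - a + 1) =>
          (⟨a + (t : ℕ), by omega⟩ : Fin (n + 1 + 1)))).transpose.mulVec z t =
      Wext n z (a + t) + 2 * Wext n z (a + t + 1) + 2 * Wext n z (a + t + 2) := by
  have key : ∀ i : Fin n,
      ((matCt n).submatrix id
        (fun t : Fin (b - a + 1) =>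
          (⟨a + (t : ℕ), by omega⟩ : Fin (n + 1 + 1)))).transpose t i * z i =
      (if (i:ℕ) + 2 = a + (t:ℕ) + 2 then 2 * z i else 0) +
      ((if (i:ℕ) + 1 = a + (t:ℕ) then 2 * z i else 0) +
       (if (i:ℕ) + 2 = a + (t:ℕ) then z i else 0)) := by
    intro i
    simp only [Matrix.transpose_apply, Matrix.submatrix_apply, id_eq, matCt, Fin.val_mk]
    split_ifs <;> (try (exfalso; omega)) <;> ring
  simp only [Matrix.mulVec, dotProduct]
  rw [Finset.sum_congr rfl (fun i _ => key i),
    Finset.sum_add_distrib, Finset.sum_add_distrib,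
    sum_pick, sum_pick, sum_pick]
  have c2 : (if h : 2 ≤ a + (t:ℕ) + 2 ∧ a + (t:ℕ) + 2 - 2 < n
        then 2 * z ⟨a + (t:ℕ) + 2 - 2, h.2⟩ else 0)
      = 2 * Wext n z (a + t + 2) := by
    rw [Wext]
    by_cases h : a + (t:ℕ) < n
    · rw [dif_pos (by omega), dif_pos (by omega)]
    · rw [dif_neg (by omega), dif_neg (by omega), mul_zero]
  have c1 : (if h : 1 ≤ a + (t:ℕ) ∧ a + (t:ℕ) - 1 < n then 2 * z ⟨a + (t:ℕ) - 1, h.2⟩ else 0)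
      = 2 * Wext n z (a + t + 1) := by
    rw [Wext]
    by_cases h : 1 ≤ a + (t:ℕ) ∧ a + (t:ℕ) - 1 < n
    · rw [dif_pos h, dif_pos (by omega)]
      have hidx : a + (t:ℕ) + 1 - 2 = a + (t:ℕ) - 1 := by omega
      simp only [hidx]
    · rw [dif_neg h, dif_neg (by omega), mul_zero]
  have c0 : (if h : 2 ≤ a + (t:ℕ) ∧ a + (t:ℕ) - 2 < n then z ⟨a + (t:ℕ) - 2, h.2⟩ else 0)
      = Wext n z (a + t) := by
    rw [Wext]
    by_cases h : 2 ≤ a + (t:ℕ) ∧ a + (t:ℕ) ≤ n + 1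
    · rw [dif_pos (by omega), dif_pos (by omega)]
    · rw [dif_neg (by omega), dif_neg h]
  rw [c2, c1, c0]
  ring

/-! ### Kernel computations -/

lemma ker_lt {n a b : ℕ} {M : Matrix (Fin n) (Fin (b - a + 1)) ℚ} (hab : a ≤ b) (hbn : b < n)
    (hM : ∀ x (i : Fin n), M.mulVec x i =
      2 * Xext a b x i + 2 * Xext a b x ((i:ℕ)+1) + Xext a b x ((i:ℕ)+2)) :
    ∀ x, M.mulVec x = 0 → x = 0 := by
  intro x hx
  have heq : ∀ i : Fin n,
      2 * Xext a b x i + 2 * Xext a b x ((i:ℕ)+1) + Xext a b x ((i:ℕ)+2) = 0 := by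
    intro i; rw [← hM x i, hx]; rfl
  have key : ∀ d k, b < k + d → Xext a b x k = 0 := by
    intro d
    induction d with
    | zero => intro k hk; exact Xext_zero x k (Or.inr (by omega))
    | succ d ih =>
      intro k hk
      by_cases h1 : b < k
      · exact Xext_zero x k (Or.inr h1)
      · have hkn : k < n := by omega
        have h2 := heq ⟨k, hkn⟩
        simp only [Fin.val_mk] at h2
        have e1 : Xext a b x (k+1) = 0 := ih (k+1) (by omega)
        have e2 : Xext a b x (k+2) = 0 := ih (k+2) (by omega)
        rw [e1, e2] at h2
        linarith
  funext t
  have := key (b + 1) (a + t) (by omega)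
  rwa [Xext_apply hab] at this

lemma ker_ge2 {n a b : ℕ} {M : Matrix (Fin n) (Fin (b - a + 1)) ℚ} (hab : a ≤ b)
    (ha : 2 ≤ a) (hb : b < n + 2)
    (hM : ∀ x (i : Fin n), M.mulVec x i =
      2 * Xext a b x i + 2 * Xext a b x ((i:ℕ)+1) + Xext a b x ((i:ℕ)+2)) :
    ∀ x, M.mulVec x = 0 → x = 0 := by
  intro x hx
  have heq : ∀ i : Fin n,
      2 * Xext a b x i + 2 * Xext a b x ((i:ℕ)+1) + Xext a b x ((i:ℕ)+2) = 0 := by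
    intro i; rw [← hM x i, hx]; rfl
  have key : ∀ k, Xext a b x k = 0 := by
    intro k
    induction k using Nat.strong_induction_on with
    | _ k ih =>
      by_cases h1 : a ≤ k ∧ k ≤ b
      · have hkn : k - 2 < n := by omega
        have h2 := heq ⟨k - 2, hkn⟩
        simp only [Fin.val_mk] at h2
        rw [show k - 2 + 1 = k - 1 by omega, show k - 2 + 2 = k by omega,
          ih (k-2) (by omega), ih (k-1) (by omega)] at h2
        linarith
      · exact Xext_zero x k (by omega)
  funext t
  have := key (a + t)
  rwa [Xext_apply hab] at this

lemma sq_key {n : ℕ} (hn : 1 ≤ n) {M : Matrix (Fin n) (Fin (n - 1 + 1)) ℚ}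
    (hM : ∀ x (i : Fin n), M.mulVec x i =
      2 * Xext 1 n x i + 2 * Xext 1 n x ((i:ℕ)+1) + Xext 1 n x ((i:ℕ)+2))
    (x : Fin (n - 1 + 1) → ℚ) (hx : M.mulVec x = 0) :
    (∀ k, k ≤ n → Xext 1 n x k = Xext 1 n x 1 * useq k) ∧
      Xext 1 n x 1 * (useq (n-1) + useq n) = 0 := by
  have heq : ∀ i : Fin n,
      2 * Xext 1 n x i + 2 * Xext 1 n x ((i:ℕ)+1) + Xext 1 n x ((i:ℕ)+2) = 0 := by
    intro i; rw [← hM x i, hx]; rfl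
  have key : ∀ k, k ≤ n → Xext 1 n x k = Xext 1 n x 1 * useq k := by
    intro k
    induction k using Nat.strong_induction_on with
    | _ k ih =>
      match k with
      | 0 => intro _; rw [Xext_zero x 0 (Or.inl one_pos), show useq 0 = 0 from rfl, mul_zero]
      | 1 => intro _; rw [show useq 1 = 1 from rfl, mul_one]
      | (k+2) =>
        intro hk
        have h2 := heq ⟨k, by omega⟩
        simp only [Fin.val_mk] at h2
        have ihk := ih k (by omega) (by omega)
        have ihk1 := ih (k+1) (by omega) (by omega)
        rw [useq_rec]
        linear_combination h2 - 2 * ihk - 2 * ihk1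
  refine ⟨key, ?_⟩
  have hc := heq ⟨n - 1, by omega⟩
  simp only [Fin.val_mk] at hc
  rw [show n - 1 + 1 = n by omega, show n - 1 + 2 = n + 1 by omega] at hc
  have e0 : Xext 1 n x (n+1) = 0 := Xext_zero x (n+1) (Or.inr (by omega))
  have e1 := key (n-1) (by omega)
  have e2 := key n le_rfl
  linear_combination hc/2 - e1 - e2 - e0/2

lemma ker_row_left {n a b : ℕ} {N : Matrix (Fin (b - a + 1)) (Fin n) ℚ}
    (ha : a = 0) (hbn : n ≤ b + 1)
    (hN : ∀ z (t : Fin (b - a + 1)), N.mulVec z t =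
      Wext n z (a + t) + 2 * Wext n z (a + t + 1) + 2 * Wext n z (a + t + 2)) :
    ∀ z, N.mulVec z = 0 → z = 0 := by
  intro z hz
  have heq : ∀ t : Fin (b - a + 1),
      Wext n z (a + t) + 2 * Wext n z (a + t + 1) + 2 * Wext n z (a + t + 2) = 0 := by
    intro t; rw [← hN z t, hz]; rfl
  have key : ∀ k, Wext n z k = 0 := by
    intro k
    induction k using Nat.strong_induction_on with
    | _ k ih =>
      by_cases h1 : 2 ≤ k ∧ k ≤ n + 1
      · have hlt : k - 2 < b - a + 1 := by omega
        have h2 := heq ⟨k - 2, hlt⟩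
        simp only [Fin.val_mk, ha, Nat.zero_add] at h2
        rw [show k - 2 + 1 = k - 1 by omega, show k - 2 + 2 = k by omega,
          ih (k-2) (by omega), ih (k-1) (by omega)] at h2
        linarith
      · exact Wext_zero z k (by omega)
  funext i
  have := key ((i : ℕ) + 2)
  rwa [Wext_apply] at this

lemma ker_row_right {n a b : ℕ} {N : Matrix (Fin (b - a + 1)) (Fin n) ℚ}
    (ha : a ≤ 2) (hbn : b = n + 1)
    (hN : ∀ z (t : Fin (b - a + 1)), N.mulVec z t =
      Wext n z (a + t) + 2 * Wext n z (a + t + 1) + 2 * Wext n z (a + t + 2)) :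
    ∀ z, N.mulVec z = 0 → z = 0 := by
  intro z hz
  have heq : ∀ t : Fin (b - a + 1),
      Wext n z (a + t) + 2 * Wext n z (a + t + 1) + 2 * Wext n z (a + t + 2) = 0 := by
    intro t; rw [← hN z t, hz]; rfl
  have key : ∀ d k, n + 1 < k + d → Wext n z k = 0 := by
    intro d
    induction d with
    | zero => intro k hk; exact Wext_zero z k (Or.inr (by omega))
    | succ d ih =>
      intro k hk
      by_cases h1 : 2 ≤ k ∧ k ≤ n + 1
      · have hlt : k - a < b - a + 1 := by omega
        have h2 := heq ⟨k - a, hlt⟩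
        simp only [Fin.val_mk] at h2
        rw [show a + (k - a) = k by omega,
          ih (k+1) (by omega), ih (k+2) (by omega)] at h2
        linarith
      · exact Wext_zero z k (by omega)
  funext i
  have := key (n + 2) ((i : ℕ) + 2) (by omega)
  rwa [Wext_apply] at this

/-- Lemma 3.1(ii): every submatrix of `C̃_n` formed by consecutive columns
`a, a+1, …, b` (zero-indexed) has maximal rank, except for the one obtained
by deleting the first and last columns when `n ≡ 3 (mod 4)`, which has
rank `n - 1`. -/
theorem stmt_14 (n : ℕ) (hn : 1 ≤ n) (a b : ℕ) (hab : a ≤ b) (hb : b < n + 2) :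
    ((matCt n).submatrix id
        (fun t : Fin (b - a + 1) => (⟨a + (t : ℕ), by omega⟩ : Fin (n + 2)))).rank =
      if n % 4 = 3 ∧ a = 1 ∧ b = n then n - 1 else min n (b - a + 1) := by
  by_cases hex : n % 4 = 3 ∧ a = 1 ∧ b = n
  · obtain ⟨h4, ha, hb'⟩ := hex
    subst ha
    have hb2 := hb'.symm; subst hb2
    rw [if_pos ⟨h4, rfl, rfl⟩]
    set v : Fin (n - 1 + 1) → ℚ := fun t => useq (1 + (t : ℕ)) with hv_def
    have hXv : ∀ k, k ≤ n + 1 → Xext 1 n v k = useq k := by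
      intro k hk
      by_cases h : 1 ≤ k ∧ k ≤ n
      · rw [Xext, dif_pos h]
        show useq (1 + (k - 1)) = useq k
        congr 1
        omega
      · rcases (by omega : k = 0 ∨ k = n + 1) with rfl | rfl
        · rw [Xext_zero _ _ (Or.inl one_pos)]; rfl
        · rw [Xext_zero _ _ (Or.inr (by omega)), useq_succ_zero n h4]
    have hv : v ≠ 0 := by
      intro h0
      have h1 := congrFun h0 ⟨0, by omega⟩
      simp only [hv_def, Fin.val_mk, Pi.zero_apply] at h1
      rw [show (1:ℕ) + 0 = 1 from rfl, show useq 1 = 1 from rfl] at h1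
      exact one_ne_zero h1
    have hAv : ((matCt n).submatrix id
        (fun t : Fin (n - 1 + 1) => (⟨1 + (t : ℕ), by omega⟩ : Fin (n + 2)))).mulVec v = 0 := by
      funext i
      refine (mulVec_col_eq hab hb v i).trans ?_
      have hi : (i : ℕ) < n := i.isLt
      rw [hXv i (by omega), hXv ((i:ℕ)+1) (by omega), hXv ((i:ℕ)+2) (by omega), useq_rec]
      show _ = (0 : ℚ)
      ring
    have hspan : ∀ x, ((matCt n).submatrix id
        (fun t : Fin (n - 1 + 1) => (⟨1 + (t : ℕ), by omega⟩ : Fin (n + 2)))).mulVec x = 0 →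
        ∃ c : ℚ, x = c • v := by
      intro x hx
      refine ⟨Xext 1 n x 1, ?_⟩
      obtain ⟨key, -⟩ := sq_key hn (fun x i => mulVec_col_eq hab hb x i) x hx
      funext t
      have h1 : Xext 1 n x (1 + t) = x t := Xext_apply hab x t
      have h2 := key (1 + t) (by have := t.isLt; omega)
      rw [h1] at h2
      simpa [hv_def] using h2
    have hr := rank_corank_one _ v hv hAv hspan
    exact hr.trans (by omega)
  · rw [if_neg hex]
    rcases lt_or_ge b n with hbn | hbn
    · have hr := rank_full _ (ker_lt hab hbn (fun x i => mulVec_col_eq hab hb x i))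
      exact hr.trans (by omega)
    · rcases lt_or_ge a 2 with ha2 | ha2
      · by_cases hsq : a = 1 ∧ b = n
        · have h4 : n % 4 ≠ 3 := fun h => hex ⟨h, hsq.1, hsq.2⟩
          obtain ⟨ha, hb'⟩ := hsq
          subst ha
          have hb2 := hb'.symm; subst hb2
          have hker : ∀ x, ((matCt n).submatrix id
              (fun t : Fin (n - 1 + 1) => (⟨1 + (t : ℕ), by omega⟩ : Fin (n + 2)))).mulVec x = 0 →
              x = 0 := by
            intro x hx
            obtain ⟨key, hcon⟩ := sq_key hn (fun x i => mulVec_col_eq hab hb x i) x hx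
            have hX1 : Xext 1 n x 1 = 0 := by
              rcases mul_eq_zero.mp hcon with h | h
              · exact h
              · exact absurd h (useq_sum_ne n hn h4)
            funext t
            have h1 : Xext 1 n x (1 + t) = x t := Xext_apply hab x t
            have h2 := key (1 + t) (by have := t.isLt; omega)
            rw [h1, hX1, zero_mul] at h2
            exact h2
          have hr := rank_full _ hker
          exact hr.trans (by omega)
        · have hker : ∀ z, ((matCt n).submatrix id
              (fun t : Fin (b - a + 1) =>
                (⟨a + (t : ℕ), by omega⟩ : Fin (n + 2)))).transpose.mulVec z = 0 → z = 0 := by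
            by_cases ha0 : a = 0
            · exact ker_row_left ha0 (by omega) (fun z t => mulVec_row_eq hab hb z t)
            · have ha1 : a = 1 := by omega
              have hb1 : b = n + 1 := by
                rcases (by omega : b = n ∨ b = n + 1) with h | h
                · exact absurd ⟨ha1, h⟩ hsq
                · exact h
              exact ker_row_right (by omega) hb1 (fun z t => mulVec_row_eq hab hb z t)
          have hr := rank_full _ hker
          have hr2 := (Matrix.rank_transpose ((matCt n).submatrix id
              (fun t : Fin (b - a + 1) =>
                (⟨a + (t : ℕ), by omega⟩ : Fin (n + 2))))).symm.trans hr
          exact hr2.trans (by omega)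
      · have hr := rank_full _ (ker_ge2 hab ha2 hb (fun x i => mulVec_col_eq hab hb x i))
        exact hr.trans (by omega)
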